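/- Let E be the 2-dimensional ℂ-vector space with basis {x, y} and let ω be the symplectic form on E determined by ω(x,y) = 1 = −ω(y,x) and ω(x,x) = ω(y,y) = 0. Then the pairing {·,·}_ω : TE × TE → TE maps [TE,TE] × TE and TE × [TE,TE] into [TE,TE], and the induced bracket on the quotient 𝔏(Q) := TE/[TE,TE] gives a well-defined Lie algebra structure on 𝔏(Q): it is ℂ-bilinear, alternating, and satisfies the Jacobi identity. (Proposition 1.2 of the paper.) -/

import Mathlib

/- STATEMENT 0 (Proposition 1.2 of the paper): Let E be the 2-dimensional ℂ-vector space
with basis {x, y} and let ω be the symplectic form with ω(x,y) = 1 = −ω(y,x),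
ω(x,x) = ω(y,y) = 0. Then the pairing {·,·}_ω : TE × TE → TE maps [TE,TE] × TE and
TE × [TE,TE] into [TE,TE], and the induced bracket on 𝔏(Q) := TE/[TE,TE] is a well-defined
Lie algebra structure: ℂ-bilinear, alternating, and satisfying the Jacobi identity. -/

noncomputable section

open scoped BigOperators

/-- The product `u_1 ⊗ ⋯ ⊗ u_p` in the tensor algebra associated to a list of vectors. -/
def wordProd (k : Type*) [Field k] {E : Type*} [AddCommGroup E] [Module k E]
    (w : List E) : TensorAlgebra k E :=
  (w.map fun e => TensorAlgebra.ι k e).prod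

/-- The list obtained from `w` by deleting the entry at position `i` and cyclically rotating
so that the entries after position `i` come first. -/
def rotAt {E : Type*} (w : List E) (i : ℕ) : List E :=
  w.drop (i + 1) ++ w.take i

/-- `[TE,TE]`: the k-linear span of all commutators in the tensor algebra. -/
def commSpan (k E : Type*) [Field k] [AddCommGroup E] [Module k E] :
    Submodule k (TensorAlgebra k E) :=
  Submodule.span k {z | ∃ a b : TensorAlgebra k E, z = a * b - b * a}

/-- The value of the pairing `{·,·}_ω` on a pair of homogeneous tensors
`u_1 ⊗ ⋯ ⊗ u_p`, `v_1 ⊗ ⋯ ⊗ v_q`: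
`Σ_{i,j} ω(u_i, v_j) • u_{i+1}⊗⋯⊗u_p⊗u_1⊗⋯⊗u_{i−1} ⊗ v_{j+1}⊗⋯⊗v_q⊗v_1⊗⋯⊗v_{j−1}`. -/
def wordBracket {k : Type*} [Field k] {E : Type*} [AddCommGroup E] [Module k E]
    (ω : E →ₗ[k] E →ₗ[k] k) (u v : List E) : TensorAlgebra k E :=
  ∑ i : Fin u.length, ∑ j : Fin v.length,
    ω (u.get i) (v.get j) • wordProd k (rotAt u i ++ rotAt v j)

namespace Ginz
open Finset

variable {E : Type*} [AddCommGroup E] [Module ℂ E]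

lemma wordProd_append (u v : List E) :
    wordProd ℂ (u ++ v) = wordProd ℂ u * wordProd ℂ v := by
  simp [wordProd]

lemma wordProd_nil : wordProd ℂ ([] : List E) = 1 := rfl

lemma comm_mem (a b : TensorAlgebra ℂ E) : a * b - b * a ∈ commSpan ℂ E :=
  Submodule.subset_span ⟨a, b, rfl⟩

/-- image of a word in the quotient -/
def NN (l : List E) : TensorAlgebra ℂ E ⧸ commSpan ℂ E :=
  (commSpan ℂ E).mkQ (wordProd ℂ l)

lemma mk_mul_comm (a b : TensorAlgebra ℂ E) :
    (commSpan ℂ E).mkQ (a * b) = (commSpan ℂ E).mkQ (b * a) := by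
  rw [Submodule.mkQ_apply, Submodule.mkQ_apply, Submodule.Quotient.eq]
  exact comm_mem a b

lemma NN_append_comm (u v : List E) : NN (u ++ v) = NN (v ++ u) := by
  simp only [NN, wordProd_append]; exact mk_mul_comm _ _

lemma NN_rotate (l : List E) (n : ℕ) : NN (l.rotate n) = NN l := by
  induction n generalizing l with
  | zero => simp
  | succ n ih =>
    have h : l.rotate (n + 1) = (l.rotate 1).rotate n := by
      rw [List.rotate_rotate, Nat.add_comm]
    rw [h, ih]
    cases l with
    | nil => simp
    | cons a t =>
      have h1 : (a :: t).rotate 1 = t ++ [a] := by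
        simpa using List.rotate_cons_succ t a 0
      rw [h1, NN_append_comm]
      rfl

lemma rotate_eq_cons {l : List E} {n : ℕ} (h : n < l.length) :
    l.rotate n = l.getD n 0 :: rotAt l n := by
  rw [List.rotate_eq_drop_append_take h.le, List.drop_eq_getElem_cons h,
    List.getD_eq_getElem l 0 h, rotAt, List.cons_append]

lemma rotAt_length {l : List E} {n : ℕ} (h : n < l.length) :
    (rotAt l n).length = l.length - 1 := by
  simp only [rotAt, List.length_append, List.length_drop, List.length_take]
  omega

/-- term of the bracket attached to a pair of pointed cyclic words -/
def brTerm (ω : E →ₗ[ℂ] E →ₗ[ℂ] ℂ) : List E → List E → TensorAlgebra ℂ E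
  | a :: x, b :: y => ω a b • wordProd ℂ (x ++ y)
  | [], _ => 0
  | _, [] => 0

@[simp] lemma brTerm_nil_left (ω : E →ₗ[ℂ] E →ₗ[ℂ] ℂ) (t : List E) :
    brTerm ω [] t = 0 := by cases t <;> rfl

@[simp] lemma brTerm_nil_right (ω : E →ₗ[ℂ] E →ₗ[ℂ] ℂ) (s : List E) :
    brTerm ω s [] = 0 := by cases s <;> rfl

@[simp] lemma brTerm_cons (ω : E →ₗ[ℂ] E →ₗ[ℂ] ℂ) (a b : E) (x y : List E) :
    brTerm ω (a :: x) (b :: y) = ω a b • wordProd ℂ (x ++ y) := rfl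

lemma wordBracket_eq (ω : E →ₗ[ℂ] E →ₗ[ℂ] ℂ) (u v : List E) :
    wordBracket ω u v = ∑ i ∈ range u.length, ∑ j ∈ range v.length,
      brTerm ω (u.rotate i) (v.rotate j) := by
  rw [wordBracket]
  have h : ∀ i : Fin u.length, ∀ j : Fin v.length,
      ω (u.get i) (v.get j) • wordProd ℂ (rotAt u i ++ rotAt v j)
        = brTerm ω (u.rotate i) (v.rotate j) := by
    intro i j
    rw [rotate_eq_cons i.isLt, rotate_eq_cons j.isLt, brTerm_cons,
      List.getD_eq_getElem u 0 i.isLt, List.getD_eq_getElem v 0 j.isLt]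
    rfl
  calc ∑ i : Fin u.length, ∑ j : Fin v.length,
        ω (u.get i) (v.get j) • wordProd ℂ (rotAt u i ++ rotAt v j)
      = ∑ i : Fin u.length, ∑ j : Fin v.length, brTerm ω (u.rotate i) (v.rotate j) := by
        refine Finset.sum_congr rfl fun i _ => Finset.sum_congr rfl fun j _ => h i j
    _ = ∑ i : Fin u.length, ∑ j ∈ range v.length, brTerm ω (u.rotate i) (v.rotate j) := by
        refine Finset.sum_congr rfl fun i _ => ?_
        exact Fin.sum_univ_eq_sum_range (fun j => brTerm ω (u.rotate i) (v.rotate j)) _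
    _ = _ := Fin.sum_univ_eq_sum_range
        (fun i => ∑ j ∈ range v.length, brTerm ω (u.rotate i) (v.rotate j)) _

section rotsum
variable {M : Type*} [AddCommGroup M]

lemma sum_rotations_succ (f : List E → M) (l : List E) :
    ∑ i ∈ range l.length, f (l.rotate (i + 1)) = ∑ i ∈ range l.length, f (l.rotate i) := by
  cases hl : l.length with
  | zero => simp
  | succ n =>
    set g : ℕ → M := fun i => f (l.rotate i) with hg
    have A : ∑ i ∈ range (n + 2), g i = (∑ i ∈ range (n + 1), g (i + 1)) + g 0 :=
      Finset.sum_range_succ' g (n + 1)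
    have B : ∑ i ∈ range (n + 2), g i = (∑ i ∈ range (n + 1), g i) + g (n + 1) :=
      Finset.sum_range_succ g (n + 1)
    have C : g (n + 1) = g 0 := by
      simp only [hg, List.rotate_zero]
      rw [← hl, List.rotate_length]
    have := A.symm.trans B
    rw [C] at this
    exact add_right_cancel this
end rotsum

lemma sum_rotations_rotate {M : Type*} [AddCommGroup M] (f : List E → M) (l : List E) (n : ℕ) :
    ∑ i ∈ range (l.rotate n).length, f ((l.rotate n).rotate i)
      = ∑ i ∈ range l.length, f (l.rotate i) := by
  induction n generalizing l with
  | zero => simp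
  | succ n ih =>
    have h : l.rotate (n + 1) = (l.rotate 1).rotate n := by
      rw [List.rotate_rotate, Nat.add_comm]
    rw [h, ih (l.rotate 1)]
    simp only [List.length_rotate, List.rotate_rotate]
    have h2 : ∀ i, l.rotate (1 + i) = l.rotate (i + 1) := fun i => by rw [Nat.add_comm]
    simp only [h2]
    exact sum_rotations_succ f l

lemma wordBracket_rotate_left (ω : E →ₗ[ℂ] E →ₗ[ℂ] ℂ) (l v : List E) (n : ℕ) :
    wordBracket ω (l.rotate n) v = wordBracket ω l v := by
  rw [wordBracket_eq, wordBracket_eq]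
  exact sum_rotations_rotate (fun s => ∑ j ∈ range v.length, brTerm ω s (v.rotate j)) l n

lemma wordBracket_rotate_right (ω : E →ₗ[ℂ] E →ₗ[ℂ] ℂ) (u l : List E) (n : ℕ) :
    wordBracket ω u (l.rotate n) = wordBracket ω u l := by
  rw [wordBracket_eq, wordBracket_eq]
  exact Finset.sum_congr rfl fun i _ =>
    sum_rotations_rotate (fun t => brTerm ω (u.rotate i) t) l n

lemma append_rotate (u v : List E) : (u ++ v).rotate u.length = v ++ u := by
  rw [List.rotate_eq_drop_append_take (by simp), List.drop_left, List.take_left]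

lemma wordBracket_append_left (ω : E →ₗ[ℂ] E →ₗ[ℂ] ℂ) (u v w : List E) :
    wordBracket ω (u ++ v) w = wordBracket ω (v ++ u) w := by
  rw [← append_rotate u v, wordBracket_rotate_left]

lemma wordBracket_append_right (ω : E →ₗ[ℂ] E →ₗ[ℂ] ℂ) (w u v : List E) :
    wordBracket ω w (u ++ v) = wordBracket ω w (v ++ u) := by
  rw [← append_rotate u v, wordBracket_rotate_right]


lemma span_words : Submodule.span ℂ
    (Set.range (wordProd ℂ : List E → TensorAlgebra ℂ E)) = ⊤ := by
  rw [eq_top_iff]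
  rintro x -
  induction x using TensorAlgebra.induction with
  | algebraMap r =>
      have h : (algebraMap ℂ (TensorAlgebra ℂ E)) r = r • wordProd ℂ ([] : List E) := by
        rw [wordProd_nil, Algebra.algebraMap_eq_smul_one]
      rw [h]
      exact Submodule.smul_mem _ _ (Submodule.subset_span ⟨[], rfl⟩)
  | ι e => exact Submodule.subset_span ⟨[e], by simp [wordProd]⟩
  | mul a b ha hb =>
      have h := Submodule.mul_mem_mul ha hb
      rw [Submodule.span_mul_span] at h
      refine Submodule.span_mono ?_ h
      rintro z ⟨p, ⟨lp, rfl⟩, q, ⟨lq, rfl⟩, rfl⟩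
      exact ⟨lp ++ lq, by rw [wordProd_append]⟩
  | add a b ha hb => exact Submodule.add_mem _ ha hb

lemma word_span_induction {P : TensorAlgebra ℂ E → Prop}
    (hw : ∀ l : List E, P (wordProd ℂ l)) (h0 : P 0)
    (hadd : ∀ a b, P a → P b → P (a + b))
    (hsmul : ∀ (c : ℂ) a, P a → P (c • a)) :
    ∀ f : TensorAlgebra ℂ E, P f := by
  intro f
  have hf : f ∈ Submodule.span ℂ
      (Set.range (wordProd ℂ : List E → TensorAlgebra ℂ E)) := by
    rw [span_words]; trivial
  induction hf using Submodule.span_induction with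
  | mem x hx => obtain ⟨l, rfl⟩ := hx; exact hw l
  | zero => exact h0
  | add x y _ _ hx hy => exact hadd x y hx hy
  | smul c x _ hx => exact hsmul c x hx

/-! ### splicing terms for the Jacobi identity -/

/-- splice `x` into `y` at position `m`, and append `z`. -/
def spl (m : ℕ) (y x z : List E) : List E :=
  y.take m ++ x ++ y.drop (m + 1) ++ z

variable (ω : E →ₗ[ℂ] E →ₗ[ℂ] ℂ)

/-- The basic quadruple term of the expanded double bracket. -/
def tA (u v w : List E) (i j k m : ℕ) : TensorAlgebra ℂ E ⧸ commSpan ℂ E :=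
  (ω (v.getD j 0) (w.getD k 0) * ω (u.getD i 0) ((rotAt v j).getD m 0)) •
    NN (spl m (rotAt v j) (rotAt u i) (rotAt w k))

lemma rot_shift {v : List E} {j m : ℕ} (hj : j < v.length) (hm : m < v.length - 1) :
    v.getD ((j + m + 1) % v.length) 0 = (rotAt v j).getD m 0 ∧
    rotAt v ((j + m + 1) % v.length)
      = (rotAt v j).drop (m + 1) ++ v.getD j 0 :: (rotAt v j).take m := by
  have hy : (rotAt v j).length = v.length - 1 := rotAt_length hj
  have hq : 0 < v.length := lt_of_le_of_lt (Nat.zero_le _) hj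
  have hj' : (j + m + 1) % v.length < v.length := Nat.mod_lt _ hq
  have h1 : v.rotate ((j + m + 1) % v.length)
      = v.getD ((j + m + 1) % v.length) 0 :: rotAt v ((j + m + 1) % v.length) :=
    rotate_eq_cons hj'
  have h2 : v.rotate ((j + m + 1) % v.length)
      = (rotAt v j).getD m 0
        :: ((rotAt v j).drop (m + 1) ++ v.getD j 0 :: (rotAt v j).take m) := by
    rw [List.rotate_mod]
    have h3 : v.rotate (j + m + 1) = (v.rotate j).rotate (m + 1) := by
      rw [List.rotate_rotate]; ring_nf
    rw [h3, rotate_eq_cons hj,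
      List.rotate_eq_drop_append_take (by simp [hy]; omega),
      List.drop_succ_cons, List.take_succ_cons,
      List.drop_eq_getElem_cons (by omega : m < (rotAt v j).length),
      List.getD_eq_getElem (rotAt v j) 0 (by omega), List.cons_append]
  have := h1.symm.trans h2
  rw [List.cons.injEq] at this
  exact this

lemma KL (hskew : ∀ a b : E, ω a b = - ω b a) (u v w : List E) (i k : ℕ) :
    ∑ j ∈ range v.length, ∑ m ∈ range (v.length - 1), tA ω u v w i j k m
      = ∑ j ∈ range v.length, ∑ m ∈ range (v.length - 1), tA ω w v u k j i m := by
  rw [← Finset.sum_product', ← Finset.sum_product']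
  refine Finset.sum_nbij'
    (fun p => ((p.1 + p.2 + 1) % v.length, v.length - 2 - p.2))
    (fun p => ((p.1 + p.2 + 1) % v.length, v.length - 2 - p.2))
    ?_ ?_ ?_ ?_ ?_
  · rintro ⟨j, m⟩ hp
    simp only [Finset.mem_product, Finset.mem_range] at hp ⊢
    have hq : 0 < v.length := by omega
    exact ⟨Nat.mod_lt _ hq, by omega⟩
  · rintro ⟨j, m⟩ hp
    simp only [Finset.mem_product, Finset.mem_range] at hp ⊢
    have hq : 0 < v.length := by omega
    exact ⟨Nat.mod_lt _ hq, by omega⟩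
  · rintro ⟨j, m⟩ hp
    simp only [Finset.mem_product, Finset.mem_range] at hp
    have key : ((j + m + 1) % v.length + (v.length - 2 - m) + 1) % v.length = j := by
      rw [Nat.add_assoc, Nat.mod_add_mod]
      have h4 : j + m + 1 + (v.length - 2 - m + 1) = j + v.length := by omega
      rw [h4, Nat.add_mod_right, Nat.mod_eq_of_lt hp.1]
    simp only [Prod.mk.injEq]
    exact ⟨key, by omega⟩
  · rintro ⟨j, m⟩ hp
    simp only [Finset.mem_product, Finset.mem_range] at hp
    have key : ((j + m + 1) % v.length + (v.length - 2 - m) + 1) % v.length = j := by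
      rw [Nat.add_assoc, Nat.mod_add_mod]
      have h4 : j + m + 1 + (v.length - 2 - m + 1) = j + v.length := by omega
      rw [h4, Nat.add_mod_right, Nat.mod_eq_of_lt hp.1]
    simp only [Prod.mk.injEq]
    exact ⟨key, by omega⟩
  · rintro ⟨j, m⟩ hp
    simp only [Finset.mem_product, Finset.mem_range] at hp
    obtain ⟨hj, hm⟩ := hp
    obtain ⟨hgd, hrot⟩ := rot_shift hj hm
    set y := rotAt v j with hydef
    have hy : y.length = v.length - 1 := rotAt_length hj
    set j' := (j + m + 1) % v.length with hj'def
    set m' := v.length - 2 - m with hm'def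
    have hlen : (y.drop (m + 1)).length = m' := by
      rw [List.length_drop]; omega
    -- identify the pieces of `rotAt v j'`
    have htake : (rotAt v j').take m' = y.drop (m + 1) := by
      rw [hrot]; exact List.take_left' hlen
    have hdrop : (rotAt v j').drop (m' + 1) = y.take m := by
      rw [hrot]
      have h5 : (y.drop (m + 1) ++ v.getD j 0 :: y.take m).drop m'
          = v.getD j 0 :: y.take m := List.drop_left' hlen
      have h6 : ∀ (L : List E), L.drop (m' + 1) = (L.drop m').drop 1 := by
        intro L; rw [List.drop_drop]
      rw [h6, h5]
      simp
    have hgd' : (rotAt v j').getD m' 0 = v.getD j 0 := by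
      rw [hrot]
      rw [List.getD_append_right _ _ _ _ (by omega : (y.drop (m+1)).length ≤ m')]
      simp [hlen]
    -- coefficient equality and NN equality
    have hcoef : ω (v.getD j 0) (w.getD k 0) * ω (u.getD i 0) (y.getD m 0)
        = ω (y.getD m 0) (u.getD i 0) * ω (w.getD k 0) (v.getD j 0) := by
      rw [hskew (y.getD m 0) (u.getD i 0), hskew (w.getD k 0) (v.getD j 0)]
      ring
    have hNN : NN (y.take m ++ rotAt u i ++ (y.drop (m + 1) ++ rotAt w k))
        = NN (y.drop (m + 1) ++ rotAt w k ++ (y.take m ++ rotAt u i)) := by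
      calc NN (y.take m ++ rotAt u i ++ (y.drop (m + 1) ++ rotAt w k))
          = NN ((y.take m ++ rotAt u i) ++ (y.drop (m + 1) ++ rotAt w k)) := by
            simp [List.append_assoc]
        _ = NN ((y.drop (m + 1) ++ rotAt w k) ++ (y.take m ++ rotAt u i)) :=
            NN_append_comm _ _
        _ = _ := by simp [List.append_assoc]
    simp only [tA, spl]
    rw [hgd, hgd', htake, hdrop, hcoef]
    congr 1
    simpa [List.append_assoc] using hNN


lemma rotate_append_lt (y z : List E) {m : ℕ} (hm : m < y.length) :
    (y ++ z).rotate m = y.getD m 0 :: (y.drop (m + 1) ++ z ++ y.take m) := by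
  rw [List.rotate_eq_drop_append_take (by simp; omega),
    List.drop_append_of_le_length hm.le, List.take_append_of_le_length hm.le,
    List.drop_eq_getElem_cons hm, List.getD_eq_getElem y 0 hm]
  simp only [List.cons_append, List.append_assoc]

lemma rotate_append_ge (y z : List E) {m : ℕ} (hm : m < z.length) :
    (y ++ z).rotate (y.length + m) = z.getD m 0 :: (z.drop (m + 1) ++ y ++ z.take m) := by
  rw [List.rotate_eq_drop_append_take (by simp; omega),
    List.drop_append, List.take_append,
    Nat.add_sub_cancel_left, List.drop_of_length_le (Nat.le_add_right y.length m),
    List.take_of_length_le (Nat.le_add_right y.length m), List.nil_append,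
    List.drop_eq_getElem_cons hm, List.getD_eq_getElem z 0 hm]
  simp only [List.cons_append, List.append_assoc]

lemma sum_rot3 {M : Type*} [AddCommMonoid M] (p q r : ℕ) (f : ℕ → ℕ → ℕ → M) :
    ∑ j ∈ range q, ∑ k ∈ range r, ∑ i ∈ range p, f i j k
      = ∑ i ∈ range p, ∑ j ∈ range q, ∑ k ∈ range r, f i j k := by
  have h1 : ∀ j, ∑ k ∈ range r, ∑ i ∈ range p, f i j k
      = ∑ i ∈ range p, ∑ k ∈ range r, f i j k := fun j => Finset.sum_comm
  simp only [h1]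
  exact Finset.sum_comm

section withBr

variable (Br : TensorAlgebra ℂ E →ₗ[ℂ] TensorAlgebra ℂ E →ₗ[ℂ] TensorAlgebra ℂ E)
  (hBr : ∀ u v : List E, Br (wordProd ℂ u) (wordProd ℂ v) = wordBracket ω u v)
  (hskew : ∀ a b : E, ω a b = - ω b a)

include hBr

lemma expand_inner (u v w : List E) {j k : ℕ} (hj : j < v.length) (hk : k < w.length)
    (hskew : ∀ a b : E, ω a b = - ω b a) :
    (commSpan ℂ E).mkQ (Br (wordProd ℂ u) (brTerm ω (v.rotate j) (w.rotate k)))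
      = ∑ i ∈ range u.length,
          ((∑ m ∈ range (v.length - 1), tA ω u v w i j k m)
            + ∑ m ∈ range (w.length - 1), -tA ω u w v i k j m) := by
  rw [rotate_eq_cons hj, rotate_eq_cons hk, brTerm_cons, map_smul, hBr,
    wordBracket_eq, map_smul, map_sum, Finset.smul_sum]
  refine Finset.sum_congr rfl fun i hi => ?_
  rw [Finset.mem_range] at hi
  rw [map_sum, Finset.smul_sum, List.length_append, Finset.sum_range_add]
  congr 1
  · refine Finset.sum_congr (by rw [rotAt_length hj]) fun m hm => ?_
    rw [Finset.mem_range] at hm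
    have hm' : m < (rotAt v j).length := by rw [rotAt_length hj]; omega
    rw [rotate_append_lt _ _ hm', rotate_eq_cons hi, brTerm_cons, map_smul, smul_smul]
    simp only [tA]
    congr 1
    show NN (rotAt u i ++ ((rotAt v j).drop (m + 1) ++ rotAt w k ++ (rotAt v j).take m))
        = NN (spl m (rotAt v j) (rotAt u i) (rotAt w k))
    calc NN (rotAt u i ++ ((rotAt v j).drop (m + 1) ++ rotAt w k ++ (rotAt v j).take m))
        = NN ((rotAt u i ++ (rotAt v j).drop (m + 1) ++ rotAt w k) ++ (rotAt v j).take m) := by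
          simp [List.append_assoc]
      _ = NN ((rotAt v j).take m ++ (rotAt u i ++ (rotAt v j).drop (m + 1) ++ rotAt w k)) :=
          NN_append_comm _ _
      _ = _ := by simp [spl, List.append_assoc]
  · refine Finset.sum_congr (by rw [rotAt_length hk]) fun m hm => ?_
    rw [Finset.mem_range] at hm
    have hm' : m < (rotAt w k).length := by rw [rotAt_length hk]; omega
    rw [rotate_append_ge _ _ hm', rotate_eq_cons hi, brTerm_cons, map_smul, smul_smul]
    have hneg : -tA ω u w v i k j m
        = (ω (v.getD j 0) (w.getD k 0) * ω (u.getD i 0) ((rotAt w k).getD m 0)) •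
            NN (spl m (rotAt w k) (rotAt u i) (rotAt v j)) := by
      simp only [tA]
      rw [hskew (w.getD k 0) (v.getD j 0)]
      simp [neg_mul, neg_smul]
    rw [hneg]
    congr 1
    show NN (rotAt u i ++ ((rotAt w k).drop (m + 1) ++ rotAt v j ++ (rotAt w k).take m))
        = NN (spl m (rotAt w k) (rotAt u i) (rotAt v j))
    calc NN (rotAt u i ++ ((rotAt w k).drop (m + 1) ++ rotAt v j ++ (rotAt w k).take m))
        = NN ((rotAt u i ++ (rotAt w k).drop (m + 1) ++ rotAt v j) ++ (rotAt w k).take m) := by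
          simp [List.append_assoc]
      _ = NN ((rotAt w k).take m ++ (rotAt u i ++ (rotAt w k).drop (m + 1) ++ rotAt v j)) :=
          NN_append_comm _ _
      _ = _ := by simp [spl, List.append_assoc]

lemma expand (u v w : List E) (hskew : ∀ a b : E, ω a b = - ω b a) :
    (commSpan ℂ E).mkQ (Br (wordProd ℂ u) (Br (wordProd ℂ v) (wordProd ℂ w)))
      = (∑ i ∈ range u.length, ∑ j ∈ range v.length, ∑ k ∈ range w.length,
          ∑ m ∈ range (v.length - 1), tA ω u v w i j k m)
        - ∑ i ∈ range u.length, ∑ j ∈ range v.length, ∑ k ∈ range w.length,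
          ∑ m ∈ range (w.length - 1), tA ω u w v i k j m := by
  rw [hBr v w, wordBracket_eq]
  simp only [map_sum]
  rw [Finset.sum_congr rfl (fun j hj => Finset.sum_congr rfl (fun k hk =>
    expand_inner ω Br hBr u v w (Finset.mem_range.1 hj) (Finset.mem_range.1 hk) hskew))]
  simp only [Finset.sum_neg_distrib, ← sub_eq_add_neg, Finset.sum_sub_distrib]
  rw [sum_rot3 u.length v.length w.length
      (fun i j k => ∑ m ∈ range (v.length - 1), tA ω u v w i j k m),
    sum_rot3 u.length v.length w.length
      (fun i j k => ∑ m ∈ range (w.length - 1), tA ω u w v i k j m)]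

lemma jacobi_words (hskew : ∀ a b : E, ω a b = - ω b a) (u v w : List E) :
    (commSpan ℂ E).mkQ
      (Br (wordProd ℂ u) (Br (wordProd ℂ v) (wordProd ℂ w))
        + Br (wordProd ℂ v) (Br (wordProd ℂ w) (wordProd ℂ u))
        + Br (wordProd ℂ w) (Br (wordProd ℂ u) (wordProd ℂ v))) = 0 := by
  rw [map_add, map_add, expand ω Br hBr u v w hskew, expand ω Br hBr v w u hskew,
    expand ω Br hBr w u v hskew]
  have e1 : (∑ i ∈ range u.length, ∑ j ∈ range v.length, ∑ k ∈ range w.length,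
        ∑ m ∈ range (v.length - 1), tA ω u v w i j k m)
      = ∑ i ∈ range w.length, ∑ j ∈ range u.length, ∑ k ∈ range v.length,
        ∑ m ∈ range (v.length - 1), tA ω w v u i k j m := by
    calc (∑ i ∈ range u.length, ∑ j ∈ range v.length, ∑ k ∈ range w.length,
          ∑ m ∈ range (v.length - 1), tA ω u v w i j k m)
        = ∑ i ∈ range u.length, ∑ k ∈ range w.length, ∑ j ∈ range v.length,
          ∑ m ∈ range (v.length - 1), tA ω u v w i j k m :=
          Finset.sum_congr rfl fun i _ => Finset.sum_comm
      _ = ∑ i ∈ range u.length, ∑ k ∈ range w.length, ∑ j ∈ range v.length,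
          ∑ m ∈ range (v.length - 1), tA ω w v u k j i m :=
          Finset.sum_congr rfl fun i _ => Finset.sum_congr rfl fun k _ =>
            KL ω hskew u v w i k
      _ = _ := Finset.sum_comm
  have e2 : (∑ i ∈ range v.length, ∑ j ∈ range w.length, ∑ k ∈ range u.length,
        ∑ m ∈ range (w.length - 1), tA ω v w u i j k m)
      = ∑ i ∈ range u.length, ∑ j ∈ range v.length, ∑ k ∈ range w.length,
        ∑ m ∈ range (w.length - 1), tA ω u w v i k j m := by
    calc (∑ i ∈ range v.length, ∑ j ∈ range w.length, ∑ k ∈ range u.length,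
          ∑ m ∈ range (w.length - 1), tA ω v w u i j k m)
        = ∑ i ∈ range v.length, ∑ k ∈ range u.length, ∑ j ∈ range w.length,
          ∑ m ∈ range (w.length - 1), tA ω v w u i j k m :=
          Finset.sum_congr rfl fun i _ => Finset.sum_comm
      _ = ∑ i ∈ range v.length, ∑ k ∈ range u.length, ∑ j ∈ range w.length,
          ∑ m ∈ range (w.length - 1), tA ω u w v k j i m :=
          Finset.sum_congr rfl fun i _ => Finset.sum_congr rfl fun k _ =>
            KL ω hskew v w u i k
      _ = _ := Finset.sum_comm
  have e3 : (∑ i ∈ range w.length, ∑ j ∈ range u.length, ∑ k ∈ range v.length,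
        ∑ m ∈ range (u.length - 1), tA ω w u v i j k m)
      = ∑ i ∈ range v.length, ∑ j ∈ range w.length, ∑ k ∈ range u.length,
        ∑ m ∈ range (u.length - 1), tA ω v u w i k j m := by
    calc (∑ i ∈ range w.length, ∑ j ∈ range u.length, ∑ k ∈ range v.length,
          ∑ m ∈ range (u.length - 1), tA ω w u v i j k m)
        = ∑ i ∈ range w.length, ∑ k ∈ range v.length, ∑ j ∈ range u.length,
          ∑ m ∈ range (u.length - 1), tA ω w u v i j k m :=
          Finset.sum_congr rfl fun i _ => Finset.sum_comm
      _ = ∑ i ∈ range w.length, ∑ k ∈ range v.length, ∑ j ∈ range u.length,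
          ∑ m ∈ range (u.length - 1), tA ω v u w k j i m :=
          Finset.sum_congr rfl fun i _ => Finset.sum_congr rfl fun k _ =>
            KL ω hskew w u v i k
      _ = _ := Finset.sum_comm
  rw [e1, e2, e3]
  abel

lemma Br_mul_left (a bb : TensorAlgebra ℂ E) : Br (a * bb) = Br (bb * a) := by
  have base : ∀ u v : List E,
      Br (wordProd ℂ u * wordProd ℂ v) = Br (wordProd ℂ v * wordProd ℂ u) := by
    intro u v
    apply LinearMap.ext_on span_words
    rintro g ⟨l, rfl⟩
    rw [← wordProd_append, ← wordProd_append, hBr, hBr, wordBracket_append_left]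
  have key : ∀ a : TensorAlgebra ℂ E, ∀ b : TensorAlgebra ℂ E, Br (a * b) = Br (b * a) := by
    refine word_span_induction (P := fun a => ∀ b, Br (a * b) = Br (b * a)) ?_ ?_ ?_ ?_
    · intro u
      refine word_span_induction
        (P := fun b => Br (wordProd ℂ u * b) = Br (b * wordProd ℂ u)) ?_ ?_ ?_ ?_
      · intro v; exact base u v
      · simp
      · intro x y hx hy; rw [mul_add, add_mul, map_add, map_add, hx, hy]
      · intro c x hx; rw [mul_smul_comm, smul_mul_assoc, map_smul, map_smul, hx]
    · intro b; simp
    · intro x y hx hy b; rw [add_mul, mul_add, map_add, map_add, hx, hy]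
    · intro c x hx b; rw [smul_mul_assoc, mul_smul_comm, map_smul, map_smul, hx]
  exact key a bb

lemma Br_mul_right (g a bb : TensorAlgebra ℂ E) : Br g (a * bb) = Br g (bb * a) := by
  have base : ∀ u v : List E, ∀ g : TensorAlgebra ℂ E,
      Br g (wordProd ℂ u * wordProd ℂ v) = Br g (wordProd ℂ v * wordProd ℂ u) := by
    intro u v
    refine word_span_induction (P := fun g =>
      Br g (wordProd ℂ u * wordProd ℂ v) = Br g (wordProd ℂ v * wordProd ℂ u)) ?_ ?_ ?_ ?_
    · intro l
      rw [← wordProd_append, ← wordProd_append, hBr, hBr, wordBracket_append_right]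
    · simp
    · intro x y hx hy; rw [map_add, LinearMap.add_apply, LinearMap.add_apply, hx, hy]
    · intro c x hx; rw [map_smul, LinearMap.smul_apply, LinearMap.smul_apply, hx]
  have key : ∀ a : TensorAlgebra ℂ E, ∀ b g : TensorAlgebra ℂ E,
      Br g (a * b) = Br g (b * a) := by
    refine word_span_induction (P := fun a => ∀ b g, Br g (a * b) = Br g (b * a)) ?_ ?_ ?_ ?_
    · intro u
      refine word_span_induction
        (P := fun b => ∀ g, Br g (wordProd ℂ u * b) = Br g (b * wordProd ℂ u)) ?_ ?_ ?_ ?_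
      · intro v g; exact base u v g
      · simp
      · intro x y hx hy g; rw [mul_add, add_mul, map_add, map_add, hx, hy]
      · intro c x hx g; rw [mul_smul_comm, smul_mul_assoc, map_smul, map_smul, hx]
    · intro b g; simp
    · intro x y hx hy b g; rw [add_mul, mul_add, map_add, map_add, hx, hy]
    · intro c x hx b g; rw [smul_mul_assoc, mul_smul_comm, map_smul, map_smul, hx]
  exact key a bb g

lemma Br_comm_left {z : TensorAlgebra ℂ E} (hz : z ∈ commSpan ℂ E) : Br z = 0 := by
  induction hz using Submodule.span_induction with
  | mem x hx =>
      obtain ⟨a, b, rfl⟩ := hx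
      rw [map_sub, Br_mul_left ω Br hBr a b, sub_self]
  | zero => exact map_zero Br
  | add x y _ _ hx hy => rw [map_add, hx, hy, add_zero]
  | smul c x _ hx => rw [map_smul, hx, smul_zero]

lemma Br_comm_right (g : TensorAlgebra ℂ E) {z : TensorAlgebra ℂ E}
    (hz : z ∈ commSpan ℂ E) : Br g z = 0 := by
  induction hz using Submodule.span_induction with
  | mem x hx =>
      obtain ⟨a, b, rfl⟩ := hx
      rw [map_sub, Br_mul_right ω Br hBr g a b, sub_self]
  | zero => exact map_zero (Br g)
  | add x y _ _ hx hy => rw [map_add, hx, hy, add_zero]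
  | smul c x _ hx => rw [map_smul, hx, smul_zero]

omit hBr in
lemma brTerm_swap_mem (hskew : ∀ a b : E, ω a b = - ω b a) (s t : List E) :
    brTerm ω s t + brTerm ω t s ∈ commSpan ℂ E := by
  cases s with
  | nil => simp
  | cons a x =>
    cases t with
    | nil => simp
    | cons b y =>
      rw [brTerm_cons, brTerm_cons, hskew b a, neg_smul, ← sub_eq_add_neg, ← smul_sub]
      refine Submodule.smul_mem _ _ ?_
      rw [wordProd_append, wordProd_append]
      exact comm_mem _ _

omit hBr in
lemma wordBracket_swap_mem (hskew : ∀ a b : E, ω a b = - ω b a) (u v : List E) :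
    wordBracket ω u v + wordBracket ω v u ∈ commSpan ℂ E := by
  have h : wordBracket ω v u = ∑ i ∈ range u.length, ∑ j ∈ range v.length,
      brTerm ω (v.rotate j) (u.rotate i) := by
    rw [wordBracket_eq]; exact Finset.sum_comm
  rw [wordBracket_eq ω u v, h, ← Finset.sum_add_distrib]
  refine Submodule.sum_mem _ fun i _ => ?_
  rw [← Finset.sum_add_distrib]
  exact Submodule.sum_mem _ fun j _ => brTerm_swap_mem ω hskew _ _

lemma Br_swap_mem (hskew : ∀ a b : E, ω a b = - ω b a) (f g : TensorAlgebra ℂ E) :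
    Br f g + Br g f ∈ commSpan ℂ E := by
  have key : ∀ f : TensorAlgebra ℂ E, ∀ g : TensorAlgebra ℂ E,
      Br f g + Br g f ∈ commSpan ℂ E := by
    refine word_span_induction (P := fun f => ∀ g, Br f g + Br g f ∈ commSpan ℂ E) ?_ ?_ ?_ ?_
    · intro u
      refine word_span_induction (P := fun g =>
        Br (wordProd ℂ u) g + Br g (wordProd ℂ u) ∈ commSpan ℂ E) ?_ ?_ ?_ ?_
      · intro v; rw [hBr, hBr]; exact wordBracket_swap_mem ω hskew u v
      · simp
      · intro x y hx hy
        have h : Br (wordProd ℂ u) (x + y) + Br (x + y) (wordProd ℂ u)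
            = (Br (wordProd ℂ u) x + Br x (wordProd ℂ u))
              + (Br (wordProd ℂ u) y + Br y (wordProd ℂ u)) := by
          simp only [map_add, LinearMap.add_apply]; abel
        rw [h]; exact Submodule.add_mem _ hx hy
      · intro c x hx
        have h : Br (wordProd ℂ u) (c • x) + Br (c • x) (wordProd ℂ u)
            = c • (Br (wordProd ℂ u) x + Br x (wordProd ℂ u)) := by
          simp only [map_smul, LinearMap.smul_apply, smul_add]
        rw [h]; exact Submodule.smul_mem _ _ hx
    · intro g; simp
    · intro x y hx hy g
      have h : Br (x + y) g + Br g (x + y)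
          = (Br x g + Br g x) + (Br y g + Br g y) := by
        simp only [map_add, LinearMap.add_apply]; abel
      rw [h]; exact Submodule.add_mem _ (hx g) (hy g)
    · intro c x hx g
      have h : Br (c • x) g + Br g (c • x) = c • (Br x g + Br g x) := by
        simp only [map_smul, LinearMap.smul_apply, smul_add]
      rw [h]; exact Submodule.smul_mem _ _ (hx g)
  exact key f g

lemma Br_self_mem (hskew : ∀ a b : E, ω a b = - ω b a) (f : TensorAlgebra ℂ E) :
    Br f f ∈ commSpan ℂ E := by
  have h := Br_swap_mem ω Br hBr hskew f f
  have h2 : Br f f = (2⁻¹ : ℂ) • (Br f f + Br f f) := by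
    rw [← two_smul ℂ, smul_smul]
    norm_num
  rw [h2]
  exact Submodule.smul_mem _ _ h

lemma Br_jacobi_mem (hskew : ∀ a b : E, ω a b = - ω b a)
    (f g h : TensorAlgebra ℂ E) :
    Br f (Br g h) + Br g (Br h f) + Br h (Br f g) ∈ commSpan ℂ E := by
  have key : ∀ f g h : TensorAlgebra ℂ E,
      Br f (Br g h) + Br g (Br h f) + Br h (Br f g) ∈ commSpan ℂ E := by
    refine word_span_induction
      (P := fun f => ∀ g h, Br f (Br g h) + Br g (Br h f) + Br h (Br f g) ∈ commSpan ℂ E)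
      ?_ ?_ ?_ ?_
    · intro u
      refine word_span_induction (P := fun g => ∀ h,
        Br (wordProd ℂ u) (Br g h) + Br g (Br h (wordProd ℂ u))
          + Br h (Br (wordProd ℂ u) g) ∈ commSpan ℂ E) ?_ ?_ ?_ ?_
      · intro v
        refine word_span_induction (P := fun h =>
          Br (wordProd ℂ u) (Br (wordProd ℂ v) h)
            + Br (wordProd ℂ v) (Br h (wordProd ℂ u))
            + Br h (Br (wordProd ℂ u) (wordProd ℂ v)) ∈ commSpan ℂ E) ?_ ?_ ?_ ?_
        · intro w
          rw [← Submodule.Quotient.mk_eq_zero, ← Submodule.mkQ_apply]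
          exact jacobi_words ω Br hBr hskew u v w
        · simp
        · intro x y hx hy
          have he : Br (wordProd ℂ u) (Br (wordProd ℂ v) (x + y))
              + Br (wordProd ℂ v) (Br (x + y) (wordProd ℂ u))
              + Br (x + y) (Br (wordProd ℂ u) (wordProd ℂ v))
            = (Br (wordProd ℂ u) (Br (wordProd ℂ v) x)
                + Br (wordProd ℂ v) (Br x (wordProd ℂ u))
                + Br x (Br (wordProd ℂ u) (wordProd ℂ v)))
              + (Br (wordProd ℂ u) (Br (wordProd ℂ v) y)
                + Br (wordProd ℂ v) (Br y (wordProd ℂ u))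
                + Br y (Br (wordProd ℂ u) (wordProd ℂ v))) := by
            simp only [map_add, LinearMap.add_apply]; abel
          rw [he]; exact Submodule.add_mem _ hx hy
        · intro c x hx
          have he : Br (wordProd ℂ u) (Br (wordProd ℂ v) (c • x))
              + Br (wordProd ℂ v) (Br (c • x) (wordProd ℂ u))
              + Br (c • x) (Br (wordProd ℂ u) (wordProd ℂ v))
            = c • (Br (wordProd ℂ u) (Br (wordProd ℂ v) x)
                + Br (wordProd ℂ v) (Br x (wordProd ℂ u))
                + Br x (Br (wordProd ℂ u) (wordProd ℂ v))) := by
            simp only [map_smul, LinearMap.smul_apply, smul_add]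
          rw [he]; exact Submodule.smul_mem _ _ hx
      · simp
      · intro x y hx hy h
        have he : Br (wordProd ℂ u) (Br (x + y) h) + Br (x + y) (Br h (wordProd ℂ u))
            + Br h (Br (wordProd ℂ u) (x + y))
          = (Br (wordProd ℂ u) (Br x h) + Br x (Br h (wordProd ℂ u))
              + Br h (Br (wordProd ℂ u) x))
            + (Br (wordProd ℂ u) (Br y h) + Br y (Br h (wordProd ℂ u))
              + Br h (Br (wordProd ℂ u) y)) := by
          simp only [map_add, LinearMap.add_apply]; abel
        rw [he]; exact Submodule.add_mem _ (hx h) (hy h)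
      · intro c x hx h
        have he : Br (wordProd ℂ u) (Br (c • x) h) + Br (c • x) (Br h (wordProd ℂ u))
            + Br h (Br (wordProd ℂ u) (c • x))
          = c • (Br (wordProd ℂ u) (Br x h) + Br x (Br h (wordProd ℂ u))
              + Br h (Br (wordProd ℂ u) x)) := by
          simp only [map_smul, LinearMap.smul_apply, smul_add]
        rw [he]; exact Submodule.smul_mem _ _ (hx h)
    · intro g h; simp
    · intro x y hx hy g h
      have he : Br (x + y) (Br g h) + Br g (Br h (x + y)) + Br h (Br (x + y) g)
        = (Br x (Br g h) + Br g (Br h x) + Br h (Br x g))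
          + (Br y (Br g h) + Br g (Br h y) + Br h (Br y g)) := by
        simp only [map_add, LinearMap.add_apply]; abel
      rw [he]; exact Submodule.add_mem _ (hx g h) (hy g h)
    · intro c x hx g h
      have he : Br (c • x) (Br g h) + Br g (Br h (c • x)) + Br h (Br (c • x) g)
          = c • (Br x (Br g h) + Br g (Br h x) + Br h (Br x g)) := by
        simp only [map_smul, LinearMap.smul_apply, smul_add]
      rw [he]; exact Submodule.smul_mem _ _ (hx g h)
  exact key f g h

end withBr
end Ginz

theorem ginzburg_prop_1_2
    (E : Type*) [AddCommGroup E] [Module ℂ E]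
    -- E is 2-dimensional with basis {x, y}, x = b 0, y = b 1:
    (b : Module.Basis (Fin 2) ℂ E)
    (ω : E →ₗ[ℂ] E →ₗ[ℂ] ℂ)
    -- ω is the symplectic form determined by ω(x,y) = 1 = −ω(y,x), ω(x,x) = ω(y,y) = 0:
    (hskew : ∀ u v : E, ω u v = - ω v u)
    (hxy : ω (b 0) (b 1) = 1) (hyx : ω (b 1) (b 0) = -1)
    (hxx : ω (b 0) (b 0) = 0) (hyy : ω (b 1) (b 1) = 0)
    -- `Br` is the ℂ-bilinear pairing `{·,·}_ω : TE × TE → TE`, determined by its values on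
    -- homogeneous tensors (and vanishing when either argument lies in E^{⊗0} = ℂ, which is
    -- the case `u = []` resp. `v = []` of the empty sum below):
    (Br : TensorAlgebra ℂ E →ₗ[ℂ] TensorAlgebra ℂ E →ₗ[ℂ] TensorAlgebra ℂ E)
    (hBr : ∀ u v : List E, Br (wordProd ℂ u) (wordProd ℂ v) = wordBracket ω u v) :
    -- `{·,·}_ω` maps [TE,TE] × TE and TE × [TE,TE] into [TE,TE]:
    (∀ f ∈ commSpan ℂ E, ∀ g : TensorAlgebra ℂ E,
        Br f g ∈ commSpan ℂ E ∧ Br g f ∈ commSpan ℂ E) ∧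
    -- hence the bracket descends to a well-defined ℂ-bilinear bracket on
    -- 𝔏(Q) = TE/[TE,TE]:
    (∃ BrQ : (TensorAlgebra ℂ E ⧸ commSpan ℂ E) →ₗ[ℂ]
        (TensorAlgebra ℂ E ⧸ commSpan ℂ E) →ₗ[ℂ] (TensorAlgebra ℂ E ⧸ commSpan ℂ E),
      ∀ f g : TensorAlgebra ℂ E,
        BrQ (Submodule.Quotient.mk f) (Submodule.Quotient.mk g) =
          Submodule.Quotient.mk (Br f g)) ∧
    -- the induced bracket is alternating:
    (∀ f : TensorAlgebra ℂ E, Br f f ∈ commSpan ℂ E) ∧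
    -- the induced bracket satisfies the Jacobi identity:
    (∀ f g h : TensorAlgebra ℂ E,
        Br f (Br g h) + Br g (Br h f) + Br h (Br f g) ∈ commSpan ℂ E) := by
  refine ⟨?_, ?_, ?_, ?_⟩
  · intro f hf g
    constructor
    · rw [Ginz.Br_comm_left ω Br hBr hf, LinearMap.zero_apply]
      exact Submodule.zero_mem _
    · rw [Ginz.Br_comm_right ω Br hBr g hf]
      exact Submodule.zero_mem _
  · have hker1 : ∀ f : TensorAlgebra ℂ E,
        commSpan ℂ E ≤ LinearMap.ker ((commSpan ℂ E).mkQ ∘ₗ Br f) := by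
      intro f z hz
      rw [LinearMap.mem_ker, LinearMap.comp_apply, Ginz.Br_comm_right ω Br hBr f hz,
        map_zero]
    set Φ : TensorAlgebra ℂ E →
        ((TensorAlgebra ℂ E ⧸ commSpan ℂ E) →ₗ[ℂ] (TensorAlgebra ℂ E ⧸ commSpan ℂ E)) :=
      fun f => Submodule.liftQ _ ((commSpan ℂ E).mkQ ∘ₗ Br f) (hker1 f) with hΦdef
    have hΦ : ∀ f g, Φ f (Submodule.Quotient.mk g) = Submodule.Quotient.mk (Br f g) := by
      intro f g
      simp [hΦdef, Submodule.liftQ_apply]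
    have hadd : ∀ f f' : TensorAlgebra ℂ E, Φ (f + f') = Φ f + Φ f' := by
      intro f f'
      apply Submodule.linearMap_qext
      ext x
      simp only [LinearMap.comp_apply, Submodule.mkQ_apply, LinearMap.add_apply, hΦ, map_add,
        LinearMap.add_apply, Submodule.Quotient.mk_add]
    have hsmul : ∀ (c : ℂ) (f : TensorAlgebra ℂ E), Φ (c • f) = c • Φ f := by
      intro c f
      apply Submodule.linearMap_qext
      ext x
      simp only [LinearMap.comp_apply, Submodule.mkQ_apply, LinearMap.smul_apply, hΦ, map_smul,
        Submodule.Quotient.mk_smul]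
    set Φl : TensorAlgebra ℂ E →ₗ[ℂ]
        ((TensorAlgebra ℂ E ⧸ commSpan ℂ E) →ₗ[ℂ] (TensorAlgebra ℂ E ⧸ commSpan ℂ E)) :=
      { toFun := Φ, map_add' := hadd, map_smul' := fun c f => by simp [hsmul] } with hΦldef
    have hΦl : ∀ f, Φl f = Φ f := fun f => rfl
    have hker2 : commSpan ℂ E ≤ LinearMap.ker Φl := by
      intro z hz
      rw [LinearMap.mem_ker]
      apply Submodule.linearMap_qext
      ext x
      simp only [LinearMap.comp_apply, Submodule.mkQ_apply, LinearMap.zero_comp,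
        LinearMap.zero_apply, hΦl]
      rw [hΦ z x, Ginz.Br_comm_left ω Br hBr hz, LinearMap.zero_apply]
      simp
    refine ⟨Submodule.liftQ _ Φl hker2, fun f g => ?_⟩
    rw [Submodule.liftQ_apply, hΦl]
    exact hΦ f g
  · exact fun f => Ginz.Br_self_mem ω Br hBr hskew f
  · exact fun f g h => Ginz.Br_jacobi_mem ω Br hBr hskew f g h
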